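/- Let 0 < δ and 2δ ≤ ε. Let c : ℝ → ℝ be positive on [0, ε] and satisfy c(t) ≥ c(t + ε − δ) for all t ∈ [0, δ]. Let r : ℝ → ℝ satisfy 0 ≤ r(t) ≤ c(t) on [0, ε], let β ∈ [0, 1], and assume t ↦ r(t)/c(t) is interval integrable on [0, ε] and t ↦ r(t + ε − δ)/c(t) is interval integrable on [0, δ]. Suppose moreover that ∫₀^δ (r(t) + β·r(t + ε − δ))/c(t) dt = δ. Define the new schedule r′ by r′(t) = c(t) for t ∈ [0, δ), r′(t) = r(t) for t ∈ [δ, ε − δ), and r′(t) = (1 − β)·r(t) for t ∈ [ε − δ, ε]. Then ∫₀^ε r′(t)/c(t) dt ≤ ∫₀^ε r(t)/c(t) dt. -/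

import Mathlib

open MeasureTheory intervalIntegral

lemma ae_restrict_uIoc_of_ae {a b : ℝ} {g h : ℝ → ℝ}
    (hgh : ∀ᵐ x : ℝ, x ∈ Set.uIoc a b → g x = h x) :
    g =ᵐ[volume.restrict (Set.uIoc a b)] h :=
  (ae_restrict_mem measurableSet_uIoc).mp
    ((ae_restrict_of_ae hgh).mono fun _ hx hmem => hx hmem)

/-- When the swapped data exactly fills the high-capacity region `[0, δ]`, the new
schedule `r′` (full capacity on `[0, δ)`, unchanged on `[δ, ε−δ)`, reduced by the
factor `(1 − β)` on `[ε−δ, ε]`) has a network utilization cost no larger than `r`. -/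
theorem new_schedule_cost_le (δ ε : ℝ) (c r : ℝ → ℝ) (β : ℝ)
    (hδ : 0 < δ) (hε : 2 * δ ≤ ε)
    (hc_pos : ∀ t ∈ Set.Icc (0 : ℝ) ε, 0 < c t)
    (hc_dec : ∀ t ∈ Set.Icc (0 : ℝ) δ, c t ≥ c (t + ε - δ))
    (hr_nonneg : ∀ t ∈ Set.Icc (0 : ℝ) ε, 0 ≤ r t)
    (hr_le : ∀ t ∈ Set.Icc (0 : ℝ) ε, r t ≤ c t)
    (hβ : β ∈ Set.Icc (0 : ℝ) 1)
    (hint1 : IntervalIntegrable (fun t => r t / c t) volume 0 ε)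
    (hint2 : IntervalIntegrable (fun t => r (t + ε - δ) / c t) volume 0 δ)
    (hfill : (∫ t in (0:ℝ)..δ, (r t + β * r (t + ε - δ)) / c t) = δ) :
    (∫ t in (0:ℝ)..ε,
        (if t < δ then c t else if t < ε - δ then r t else (1 - β) * r t) / c t)
      ≤ ∫ t in (0:ℝ)..ε, r t / c t := by
  obtain ⟨hβ0, hβ1⟩ := hβ
  have hδε : δ ≤ ε - δ := by linarith
  have hεδ : ε - δ ≤ ε := by linarith
  have h0ε : (0:ℝ) ≤ ε := by linarith
  set f : ℝ → ℝ :=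
    fun t => (if t < δ then c t else if t < ε - δ then r t else (1 - β) * r t) / c t with hfdef
  have hne : ∀ a : ℝ, ∀ᵐ x : ℝ, x ≠ a := fun a => by
    refine ae_iff.mpr ?_
    simp [Set.setOf_eq_eq_singleton]
  -- a.e. equalities on the three pieces
  have hfa : ∀ᵐ x : ℝ, x ∈ Set.uIoc (0:ℝ) δ → f x = 1 := by
    filter_upwards [hne δ] with x hx hmem
    rw [Set.uIoc_of_le hδ.le] at hmem
    have hxδ : x < δ := lt_of_le_of_ne hmem.2 hx
    have hxε : x ∈ Set.Icc (0:ℝ) ε := ⟨hmem.1.le, by linarith [hmem.2]⟩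
    simp only [hfdef, if_pos hxδ]
    exact div_self (hc_pos x hxε).ne'
  have hfb : ∀ᵐ x : ℝ, x ∈ Set.uIoc δ (ε - δ) → f x = r x / c x := by
    filter_upwards [hne (ε - δ)] with x hx hmem
    rw [Set.uIoc_of_le hδε] at hmem
    have h1 : ¬ x < δ := not_lt.mpr hmem.1.le
    have h2 : x < ε - δ := lt_of_le_of_ne hmem.2 hx
    simp only [hfdef, if_neg h1, if_pos h2]
  have hfc : ∀ᵐ x : ℝ, x ∈ Set.uIoc (ε - δ) ε → f x = (1 - β) * (r x / c x) := by
    filter_upwards with x hmem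
    rw [Set.uIoc_of_le hεδ] at hmem
    have h1 : ¬ x < δ := not_lt.mpr (le_trans hδε hmem.1.le)
    have h2 : ¬ x < ε - δ := not_lt.mpr hmem.1.le
    simp only [hfdef, if_neg h1, if_neg h2, mul_div_assoc]
  -- integrability pieces for r/c
  have hi_a : IntervalIntegrable (fun t => r t / c t) volume 0 δ :=
    hint1.mono_set (by
      rw [Set.uIcc_of_le hδ.le, Set.uIcc_of_le h0ε]
      exact Set.Icc_subset_Icc le_rfl (by linarith))
  have hi_b : IntervalIntegrable (fun t => r t / c t) volume δ (ε - δ) :=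
    hint1.mono_set (by
      rw [Set.uIcc_of_le hδε, Set.uIcc_of_le h0ε]
      exact Set.Icc_subset_Icc hδ.le hεδ)
  have hi_c : IntervalIntegrable (fun t => r t / c t) volume (ε - δ) ε :=
    hint1.mono_set (by
      rw [Set.uIcc_of_le hεδ, Set.uIcc_of_le h0ε]
      exact Set.Icc_subset_Icc (by linarith) le_rfl)
  -- integrability pieces for f
  have hf_a : IntervalIntegrable f volume 0 δ :=
    (_root_.intervalIntegrable_const (c := (1:ℝ))).congr_ae (ae_restrict_uIoc_of_ae hfa).symm
  have hf_b : IntervalIntegrable f volume δ (ε - δ) :=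
    hi_b.congr_ae (ae_restrict_uIoc_of_ae hfb).symm
  have hf_c : IntervalIntegrable f volume (ε - δ) ε :=
    (hi_c.const_mul (1 - β)).congr_ae (ae_restrict_uIoc_of_ae hfc).symm
  -- split both integrals
  have hsplit_f : (∫ t in (0:ℝ)..ε, f t)
      = (∫ t in (0:ℝ)..δ, f t) + (∫ t in δ..(ε - δ), f t) + (∫ t in (ε - δ)..ε, f t) := by
    rw [integral_add_adjacent_intervals hf_a hf_b,
      integral_add_adjacent_intervals (hf_a.trans hf_b) hf_c]
  have hsplit_r : (∫ t in (0:ℝ)..ε, r t / c t)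
      = (∫ t in (0:ℝ)..δ, r t / c t) + (∫ t in δ..(ε - δ), r t / c t)
        + (∫ t in (ε - δ)..ε, r t / c t) := by
    rw [integral_add_adjacent_intervals hi_a hi_b,
      integral_add_adjacent_intervals (hi_a.trans hi_b) hi_c]
  -- compute the pieces of ∫ f
  have hA : (∫ t in (0:ℝ)..δ, f t) = δ := by
    rw [integral_congr_ae hfa]; simp
  have hB : (∫ t in δ..(ε - δ), f t) = ∫ t in δ..(ε - δ), r t / c t :=
    integral_congr_ae hfb
  have hC : (∫ t in (ε - δ)..ε, f t) = (1 - β) * ∫ t in (ε - δ)..ε, r t / c t := by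
    rw [integral_congr_ae hfc, intervalIntegral.integral_const_mul]
  -- expand the fill condition
  have hexp : (∫ t in (0:ℝ)..δ, (r t + β * r (t + ε - δ)) / c t)
      = (∫ t in (0:ℝ)..δ, r t / c t) + β * (∫ t in (0:ℝ)..δ, r (t + ε - δ) / c t) := by
    rw [← intervalIntegral.integral_const_mul, ← integral_add hi_a (hint2.const_mul β)]
    apply integral_congr
    intro x _
    dsimp only
    rw [add_div, mul_div_assoc]
  have hfill' : (∫ t in (0:ℝ)..δ, r t / c t)
      + β * (∫ t in (0:ℝ)..δ, r (t + ε - δ) / c t) = δ := by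
    rw [← hexp]; exact hfill
  -- the shifted integral of r/c
  have hshift : (∫ t in (0:ℝ)..δ, r (t + ε - δ) / c (t + ε - δ))
      = ∫ t in (ε - δ)..ε, r t / c t := by
    have : (∫ t in (0:ℝ)..δ, r (t + ε - δ) / c (t + ε - δ))
        = ∫ t in (0:ℝ)..δ, (fun s => r s / c s) (t + (ε - δ)) := by
      apply integral_congr
      intro x _
      dsimp only
      rw [show x + ε - δ = x + (ε - δ) from by ring]
    rw [this, integral_comp_add_right (fun s => r s / c s) (ε - δ)]
    norm_num
  have hshift_int : IntervalIntegrable (fun t => r (t + ε - δ) / c (t + ε - δ)) volume 0 δ := by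
    have h1 := hi_c.comp_add_right (ε - δ)
    have h2 : ε - δ - (ε - δ) = (0:ℝ) := by ring
    have h3 : ε - (ε - δ) = δ := by ring
    rw [h2, h3] at h1
    apply h1.congr_ae
    filter_upwards with x
    rw [show x + (ε - δ) = x + ε - δ from by ring]
  -- pointwise comparison on [0, δ]
  have hmono : (∫ t in (0:ℝ)..δ, r (t + ε - δ) / c t)
      ≤ ∫ t in (0:ℝ)..δ, r (t + ε - δ) / c (t + ε - δ) := by
    apply integral_mono_on hδ.le hint2 hshift_int
    intro x hx
    have hxs : x + ε - δ ∈ Set.Icc (0:ℝ) ε := ⟨by linarith [hx.1], by linarith [hx.2]⟩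
    have hxε : x ∈ Set.Icc (0:ℝ) ε := ⟨hx.1, by linarith [hx.2]⟩
    exact div_le_div_of_nonneg_left (hr_nonneg _ hxs) (hc_pos _ hxs) (hc_dec x hx)
  have hkey : β * (∫ t in (0:ℝ)..δ, r (t + ε - δ) / c t)
      ≤ β * ∫ t in (ε - δ)..ε, r t / c t := by
    rw [← hshift]
    exact mul_le_mul_of_nonneg_left hmono hβ0
  rw [hsplit_f, hsplit_r, hA, hB, hC]
  linarith [hfill', hkey]
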